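/- Let k ≥ 1, let Q = Z_{q_1} × ⋯ × Z_{q_{n−1}} with all q_i ≥ 2, and let q ≥ 2. If there exists a mixed Steiner system MS(1,k,Q × Z_q), then Σ_{i=1}^{n−1} (q_i − 1) ≥ (q−1)(k−1) and k divides Σ_{i=1}^{n−1} (q_i − 1) − (q−1)(k−1). -/

import Mathlib

open Finset



/-- A mixed Steiner system MS(t,k,Q) over the mixed alphabet described by `q : ι → ℕ`
(words are functions `x : ι → ℕ` with `x i < q i`): a set `C` of words of Hamming
weight `k` such that every word of Hamming weight `t` is at Hamming distance exactly
`k - t` from exactly one codeword, and distinct codewords are at Hamming distance at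
least `2(k-t)+1`. -/
def IsMixedSteiner {ι : Type*} [Fintype ι] [DecidableEq ι] (q : ι → ℕ) (t k : ℕ)
    (C : Set (ι → ℕ)) : Prop :=
  (∀ c ∈ C, (∀ i, c i < q i) ∧ hammingNorm c = k) ∧
  (∀ x : ι → ℕ, (∀ i, x i < q i) → hammingNorm x = t →
    ∃! c, c ∈ C ∧ hammingDist x c = k - t) ∧
  (∀ c ∈ C, ∀ c' ∈ C, c ≠ c' → 2 * (k - t) + 1 ≤ hammingDist c c')


lemma norm_update {ι : Type*} [Fintype ι] [DecidableEq ι] (j : ι) (a : ℕ) (ha : a ≠ 0) :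
    hammingNorm (Function.update (0 : ι → ℕ) j a) = 1 := by
  show (Finset.univ.filter fun i => Function.update (0 : ι → ℕ) j a i ≠ 0).card = 1
  rw [show (Finset.univ.filter fun i => Function.update (0 : ι → ℕ) j a i ≠ 0) = {j} from ?_]
  · simp
  · ext i
    rcases eq_or_ne i j with rfl | hne
    · simp [ha]
    · simp [Function.update_apply, hne]

lemma distA {ι : Type*} [Fintype ι] [DecidableEq ι] (c : ι → ℕ) (k : ℕ) (hk : 1 ≤ k)
    (hc : hammingNorm c = k) (j : ι) (a : ℕ) (ha : a ≠ 0) :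
    hammingDist (Function.update (0 : ι → ℕ) j a) c = k - 1 ↔ c j = a := by
  have hcard : (Finset.univ.filter fun i => c i ≠ 0).card = k := hc
  show (Finset.univ.filter fun i => Function.update (0 : ι → ℕ) j a i ≠ c i).card = k - 1 ↔ _
  constructor
  · intro hd
    by_contra hne
    have hsub : insert j ((Finset.univ.filter fun i => c i ≠ 0).erase j) ⊆
        (Finset.univ.filter fun i => Function.update (0 : ι → ℕ) j a i ≠ c i) := by
      intro i hi
      rcases Finset.mem_insert.mp hi with rfl | hi
      · simp [Ne.symm hne]
      · obtain ⟨hij, hi⟩ := Finset.mem_erase.mp hi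
        simp only [Finset.mem_filter, Finset.mem_univ, true_and] at hi ⊢
        simpa [Function.update_apply, hij] using Ne.symm hi
    have hcard2 := Finset.card_le_card hsub
    rw [Finset.card_insert_of_notMem (by simp)] at hcard2
    have := Finset.pred_card_le_card_erase (s := Finset.univ.filter fun i => c i ≠ 0) (a := j)
    omega
  · intro hja
    have hmem : j ∈ Finset.univ.filter fun i => c i ≠ 0 := by simp [hja, ha]
    rw [show (Finset.univ.filter fun i => Function.update (0 : ι → ℕ) j a i ≠ c i) =
        (Finset.univ.filter fun i => c i ≠ 0).erase j from ?_]
    · rw [Finset.card_erase_of_mem hmem, hcard]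
    · ext i
      rcases eq_or_ne i j with rfl | hne
      · simp [hja]
      · simp [Function.update_apply, hne, ne_comm]

lemma norm_split {m : ℕ} (c : Fin m ⊕ Unit → ℕ) :
    hammingNorm c = (Finset.univ.filter fun i : Fin m => c (Sum.inl i) ≠ 0).card
      + (if c (Sum.inr ()) ≠ 0 then 1 else 0) := by
  show (Finset.univ.filter fun i => c i ≠ 0).card = _
  rw [Finset.card_filter, Finset.card_filter, Fintype.sum_sum_type]
  simp

theorem stmt2 {m : ℕ} (q : Fin m → ℕ) (hq : ∀ i, 2 ≤ q i) (qq k : ℕ)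
    (hk : 1 ≤ k) (hqq : 2 ≤ qq)
    (h : ∃ C : Set (Fin m ⊕ Unit → ℕ),
        IsMixedSteiner (Sum.elim q fun _ => qq) 1 k C) :
    (qq - 1) * (k - 1) ≤ ∑ i, (q i - 1) ∧
      k ∣ (∑ i, (q i - 1)) - (qq - 1) * (k - 1) := by
  classical
  obtain ⟨C, hC1, hC2, -⟩ := h
  set q' : Fin m ⊕ Unit → ℕ := Sum.elim q fun _ => qq with hq'
  have hq'2 : ∀ j, 2 ≤ q' j := by rintro (i | u); exacts [hq i, hqq]
  have hex : ∀ j a, a ≠ 0 → a < q' j → ∃ c, (c ∈ C ∧ c j = a) ∧ ∀ y, y ∈ C → y j = a → y = c := by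
    intro j a ha haq
    have hb : ∀ i, Function.update (0 : (Fin m ⊕ Unit) → ℕ) j a i < q' i := by
      intro i
      rcases eq_or_ne i j with rfl | hne
      · simpa using haq
      · have := hq'2 i
        simp only [Function.update_apply, if_neg hne, Pi.zero_apply]
        omega
    obtain ⟨c, ⟨hcC, hcd⟩, hu⟩ := hC2 _ hb (norm_update j a ha)
    refine ⟨c, ⟨hcC, (distA c k hk (hC1 c hcC).2 j a ha).mp hcd⟩, ?_⟩
    intro y hyC hy
    exact hu y ⟨hyC, (distA y k hk (hC1 y hyC).2 j a ha).mpr hy⟩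
  choose! F hF hFu using hex
  have hFC : ∀ j a, a ≠ 0 → a < q' j → F j a ∈ C := fun j a h1 h2 => (hF j a h1 h2).1
  have hFj : ∀ j a, a ≠ 0 → a < q' j → F j a j = a := fun j a h1 h2 => (hF j a h1 h2).2
  set Φ : (Σ _ : Fin m, ℕ) → (Fin m ⊕ Unit → ℕ) := fun p => F (Sum.inl p.1) p.2 with hΦ
  set T : Finset (Σ _ : Fin m, ℕ) := Finset.univ.sigma fun i : Fin m => Finset.Ico 1 (q i)
    with hT
  have hmemT : ∀ p : (Σ _ : Fin m, ℕ), p ∈ T ↔ 1 ≤ p.2 ∧ p.2 < q p.1 := by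
    rintro ⟨i, a⟩; simp [hT, Finset.mem_sigma]
  have hΦC : ∀ p ∈ T, Φ p ∈ C := by
    intro p hp
    rw [hmemT] at hp
    exact hFC (Sum.inl p.1) p.2 (by omega) (by simpa [hq'] using hp.2)
  -- fiber lemma
  have fiber : ∀ c ∈ C, (T.filter fun p => Φ p = c).card =
      (Finset.univ.filter fun i : Fin m => c (Sum.inl i) ≠ 0).card := by
    intro c hcC
    rw [show (T.filter fun p => Φ p = c) =
        (Finset.univ.filter fun i : Fin m => c (Sum.inl i) ≠ 0).sigma
          (fun i => {c (Sum.inl i)}) from ?_]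
    · rw [Finset.card_sigma]; simp
    · ext ⟨i, a⟩
      simp only [Finset.mem_filter, Finset.mem_sigma, Finset.mem_univ, true_and,
        Finset.mem_singleton, hmemT]
      constructor
      · rintro ⟨⟨h1, h2⟩, hΦc⟩
        have hv : Φ ⟨i, a⟩ (Sum.inl i) = a := hFj (Sum.inl i) a (by omega) (by simpa [hq'] using h2)
        rw [hΦc] at hv
        exact ⟨by omega, hv.symm⟩
      · rintro ⟨hne, rfl⟩
        have haq : c (Sum.inl i) < q' (Sum.inl i) := (hC1 c hcC).1 _
        refine ⟨⟨by omega, by simpa [hq'] using haq⟩, ?_⟩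
        exact (hFu (Sum.inl i) (c (Sum.inl i)) hne haq c hcC rfl).symm
  have hT0 : (T.filter fun p => Φ p (Sum.inr ()) ≠ 0).card = (qq - 1) * (k - 1) := by
    rw [Finset.card_eq_sum_card_fiberwise (f := fun p => Φ p (Sum.inr ()))
      (t := Finset.Ico 1 qq) ?_]
    · rw [Finset.sum_congr rfl (g := fun _ => k - 1) ?_, Finset.sum_const, Nat.card_Ico,
        smul_eq_mul]
      intro b hb
      rw [Finset.mem_Ico] at hb
      have hb0 : b ≠ 0 := by omega
      have hbq : b < q' (Sum.inr ()) := by simpa [hq'] using hb.2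
      have hcbC : F (Sum.inr ()) b ∈ C := hFC _ _ hb0 hbq
      have hcbv : F (Sum.inr ()) b (Sum.inr ()) = b := hFj _ _ hb0 hbq
      rw [show ((T.filter fun p => Φ p (Sum.inr ()) ≠ 0).filter
            fun p => Φ p (Sum.inr ()) = b) = T.filter fun p => Φ p = F (Sum.inr ()) b from ?_]
      · rw [fiber _ hcbC]
        have hn := norm_split (F (Sum.inr ()) b)
        rw [(hC1 _ hcbC).2, hcbv, if_pos hb0] at hn
        show _ = k - 1
        omega
      · rw [Finset.filter_filter]
        ext p
        simp only [Finset.mem_filter]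
        constructor
        · rintro ⟨hpT, -, hval⟩
          exact ⟨hpT, hFu (Sum.inr ()) b hb0 hbq (Φ p) (hΦC p hpT) hval⟩
        · rintro ⟨hpT, hc⟩
          rw [hc, hcbv]
          exact ⟨hpT, hb0, rfl⟩
    · intro p hp
      rw [Finset.mem_coe, Finset.mem_filter] at hp
      obtain ⟨hpT, hpne⟩ := hp
      have := ((hC1 _ (hΦC p hpT)).1 (Sum.inr ()))
      simp only [hq', Sum.elim_inr] at this
      rw [Finset.mem_coe, Finset.mem_Ico]
      exact ⟨Nat.one_le_iff_ne_zero.mpr hpne, this⟩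
  obtain ⟨N, hT1⟩ : ∃ N, (T.filter fun p => ¬ Φ p (Sum.inr ()) ≠ 0).card = k * N := by
    set T1 := T.filter fun p => ¬ Φ p (Sum.inr ()) ≠ 0 with hT1def
    refine ⟨(T1.image Φ).card, ?_⟩
    rw [Finset.card_eq_sum_card_fiberwise (f := Φ) (t := T1.image Φ)
      (fun p hp => Finset.mem_image_of_mem _ hp)]
    rw [Finset.sum_congr rfl (g := fun _ => k) ?_, Finset.sum_const, smul_eq_mul, mul_comm]
    intro c hc
    obtain ⟨p0, hp0, rfl⟩ := Finset.mem_image.mp hc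
    rw [hT1def, Finset.mem_filter, not_not] at hp0
    obtain ⟨hp0T, hp0v⟩ := hp0
    have hcC : Φ p0 ∈ C := hΦC p0 hp0T
    rw [show (T1.filter fun p => Φ p = Φ p0) = T.filter fun p => Φ p = Φ p0 from ?_]
    · rw [fiber _ hcC]
      have hn := norm_split (Φ p0)
      rw [(hC1 _ hcC).2, hp0v, if_neg (by simp)] at hn
      show _ = k
      omega
    · rw [hT1def, Finset.filter_filter]
      ext p
      simp only [Finset.mem_filter]
      constructor
      · rintro ⟨hpT, -, hval⟩; exact ⟨hpT, hval⟩
      · rintro ⟨hpT, hval⟩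
        refine ⟨hpT, ?_, hval⟩
        rw [hval, hp0v]
        simp
  have htot := Finset.card_filter_add_card_filter_not
    (s := T) (p := fun p => Φ p (Sum.inr ()) ≠ 0)
  have hTcard : T.card = ∑ i, (q i - 1) := by
    rw [hT, Finset.card_sigma]
    simp [Nat.card_Ico]
  rw [hT0, hT1, hTcard] at htot
  exact ⟨by omega, ⟨N, by omega⟩⟩
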